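/- Suppose for each arm feature x in a finite set A and a reference optimal arm x*, and for estimators θ̂ satisfying ‖θ̂ − θ*‖_Σ ≤ β, the selected pair (x_t, y_t) maximizes (x+y)ᵀθ̂ + β‖x−y‖_{Σ⁻¹} over pairs in A. Then the instantaneous regret satisfies 2⟨x*, θ*⟩ − ⟨x_t + y_t, θ*⟩ ≤ 2β‖x_t − y_t‖_{Σ⁻¹}. -/

import Mathlib

open Matrix

lemma cs_posSemidef {d : ℕ} {S : Matrix (Fin d) (Fin d) ℝ} (hS : S.PosSemidef)
    (u v : Fin d → ℝ) :
    (u ⬝ᵥ S.mulVec v) ^ 2 ≤ (u ⬝ᵥ S.mulVec u) * (v ⬝ᵥ S.mulVec v) := by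
  have hsym : ∀ a b : Fin d → ℝ, a ⬝ᵥ S.mulVec b = b ⬝ᵥ S.mulVec a := by
    intro a b
    have hT : Sᵀ = S := (Matrix.conjTranspose_eq_transpose_of_trivial S) ▸ hS.1.eq
    rw [dotProduct_mulVec, ← mulVec_transpose, hT, dotProduct_comm]
  have h : ∀ t : ℝ, 0 ≤ (v ⬝ᵥ S.mulVec v) * (t * t) + (2 * (u ⬝ᵥ S.mulVec v)) * t
      + u ⬝ᵥ S.mulVec u := by
    intro t
    have h0 : 0 ≤ (u + t • v) ⬝ᵥ S.mulVec (u + t • v) := hS.dotProduct_mulVec_nonneg (u + t • v)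
    have : (u + t • v) ⬝ᵥ S.mulVec (u + t • v)
        = (v ⬝ᵥ S.mulVec v) * (t * t) + (2 * (u ⬝ᵥ S.mulVec v)) * t + u ⬝ᵥ S.mulVec u := by
      rw [mulVec_add, dotProduct_add, add_dotProduct, add_dotProduct, mulVec_smul,
        dotProduct_smul, smul_dotProduct, smul_dotProduct, dotProduct_smul,
        hsym v u]
      ring_nf
    linarith [this ▸ h0]
  have hd := discrim_le_zero h
  rw [discrim] at hd
  nlinarith [hd]

lemma cs_dot {d : ℕ} {Sig : Matrix (Fin d) (Fin d) ℝ} (hSig : Sig.PosDef)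
    (u v : Fin d → ℝ) :
    u ⬝ᵥ v ≤ Real.sqrt (u ⬝ᵥ Sig⁻¹.mulVec u) * Real.sqrt (v ⬝ᵥ Sig.mulVec v) := by
  have hinv : (Sig⁻¹).PosSemidef := (hSig.inv).posSemidef
  have hmul : Sig⁻¹.mulVec (Sig.mulVec v) = v := by
    rw [mulVec_mulVec, Matrix.nonsing_inv_mul _ hSig.det_pos.ne'.isUnit, one_mulVec]
  have key := cs_posSemidef hinv u (Sig.mulVec v)
  rw [hmul] at key
  rw [dotProduct_comm (Sig *ᵥ v) v] at key
  calc u ⬝ᵥ v ≤ Real.sqrt ((u ⬝ᵥ v) ^ 2) := by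
        rw [Real.sqrt_sq_eq_abs]; exact le_abs_self _
    _ ≤ Real.sqrt ((u ⬝ᵥ Sig⁻¹.mulVec u) * (v ⬝ᵥ Sig.mulVec v)) := Real.sqrt_le_sqrt key
    _ = _ := Real.sqrt_mul (show 0 ≤ u ⬝ᵥ Sig⁻¹.mulVec u from hinv.dotProduct_mulVec_nonneg u) _

theorem stmt_12 {d : ℕ} (A : Finset (Fin d → ℝ))
    (Sig : Matrix (Fin d) (Fin d) ℝ) (hSig : Sig.PosDef)
    (β : ℝ) (hβ : 0 < β) (θhat θstar xstar xt yt : Fin d → ℝ)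
    (hxstar : xstar ∈ A) (hopt : ∀ x ∈ A, x ⬝ᵥ θstar ≤ xstar ⬝ᵥ θstar)
    (hconc : Real.sqrt ((θhat - θstar) ⬝ᵥ Sig.mulVec (θhat - θstar)) ≤ β)
    (hxt : xt ∈ A) (hyt : yt ∈ A)
    (hmax : ∀ x ∈ A, ∀ y ∈ A,
      (x + y) ⬝ᵥ θhat + β * Real.sqrt ((x - y) ⬝ᵥ Sig⁻¹.mulVec (x - y)) ≤
      (xt + yt) ⬝ᵥ θhat + β * Real.sqrt ((xt - yt) ⬝ᵥ Sig⁻¹.mulVec (xt - yt))) :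
    2 * (xstar ⬝ᵥ θstar) - (xt + yt) ⬝ᵥ θstar ≤
      2 * β * Real.sqrt ((xt - yt) ⬝ᵥ Sig⁻¹.mulVec (xt - yt)) := by
  set e : Fin d → ℝ := θstar - θhat with he
  have hnegsqrt : Real.sqrt (e ⬝ᵥ Sig.mulVec e) ≤ β := by
    have : e ⬝ᵥ Sig.mulVec e = (θhat - θstar) ⬝ᵥ Sig.mulVec (θhat - θstar) := by
      have : e = -(θhat - θstar) := by rw [he]; ring
      rw [this, mulVec_neg, neg_dotProduct, dotProduct_neg, neg_neg]
    rw [this]; exact hconc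
  have c1 : (xstar - xt) ⬝ᵥ e ≤
      Real.sqrt ((xstar - xt) ⬝ᵥ Sig⁻¹.mulVec (xstar - xt)) * β := by
    calc (xstar - xt) ⬝ᵥ e ≤ _ * Real.sqrt (e ⬝ᵥ Sig.mulVec e) := cs_dot hSig _ _
      _ ≤ _ * β := by
        apply mul_le_mul_of_nonneg_left hnegsqrt (Real.sqrt_nonneg _)
  have c2 : (xstar - yt) ⬝ᵥ e ≤
      Real.sqrt ((xstar - yt) ⬝ᵥ Sig⁻¹.mulVec (xstar - yt)) * β := by
    calc (xstar - yt) ⬝ᵥ e ≤ _ * Real.sqrt (e ⬝ᵥ Sig.mulVec e) := cs_dot hSig _ _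
      _ ≤ _ * β := by
        apply mul_le_mul_of_nonneg_left hnegsqrt (Real.sqrt_nonneg _)
  have h1 := hmax xstar hxstar xt hxt
  have h2 := hmax xstar hxstar yt hyt
  have hd1 : (xstar - xt) ⬝ᵥ e = xstar ⬝ᵥ θstar - xt ⬝ᵥ θstar - xstar ⬝ᵥ θhat + xt ⬝ᵥ θhat := by
    rw [he]; simp [sub_dotProduct, dotProduct_sub]; ring
  have hd2 : (xstar - yt) ⬝ᵥ e = xstar ⬝ᵥ θstar - yt ⬝ᵥ θstar - xstar ⬝ᵥ θhat + yt ⬝ᵥ θhat := by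
    rw [he]; simp [sub_dotProduct, dotProduct_sub]; ring
  have ha1 : (xstar + xt) ⬝ᵥ θhat = xstar ⬝ᵥ θhat + xt ⬝ᵥ θhat := add_dotProduct _ _ _
  have ha2 : (xstar + yt) ⬝ᵥ θhat = xstar ⬝ᵥ θhat + yt ⬝ᵥ θhat := add_dotProduct _ _ _
  have ha3 : (xt + yt) ⬝ᵥ θhat = xt ⬝ᵥ θhat + yt ⬝ᵥ θhat := add_dotProduct _ _ _
  have ha4 : (xt + yt) ⬝ᵥ θstar = xt ⬝ᵥ θstar + yt ⬝ᵥ θstar := add_dotProduct _ _ _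
  rw [hd1] at c1
  rw [hd2] at c2
  rw [ha1, ha3] at h1
  rw [ha2, ha3] at h2
  rw [ha4]
  linarith [c1, c2, h1, h2]
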